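/- Let G have adjacency eigenvalues λ₁ ≥ ... ≥ λₙ with Σᵢ λᵢ = 0, exactly k of which are nonnegative, and suppose λ₁ ≥ 2m/n ≥ 0. Then EE(G) ≥ E(G)/2 + e^{2m/n} + (k - 1) - 2m/n. -/
import Mathlib

lemma exp_sub_mono' {a b : ℝ} (hb : 0 ≤ b) (hab : b ≤ a) :
    Real.exp b - b ≤ Real.exp a - a := by
  have h1 : Real.exp a = Real.exp b * Real.exp (a - b) := by
    rw [← Real.exp_add]; ring_nf
  nlinarith [Real.add_one_le_exp (a - b), Real.one_le_exp hb, Real.exp_pos b]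

theorem stmt_16 {n : ℕ} (G : SimpleGraph (Fin n)) [DecidableRel G.Adj]
    (m : ℕ) (hm : m = G.edgeFinset.card)
    (hH : (G.adjMatrix ℝ).IsHermitian)
    (hsum : ∑ i, hH.eigenvalues i = 0)
    (i₀ : Fin n) (hmax : ∀ i, hH.eigenvalues i ≤ hH.eigenvalues i₀)
    (k : ℕ) (hk : k = (Finset.univ.filter (fun i => 0 ≤ hH.eigenvalues i)).card)
    (hlam : hH.eigenvalues i₀ ≥ 2 * (m : ℝ) / n) (h0 : 2 * (m : ℝ) / n ≥ 0) :
    ∑ i, Real.exp (hH.eigenvalues i) ≥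
      (∑ i, |hH.eigenvalues i|) / 2 + Real.exp (2 * (m : ℝ) / n) + ((k : ℝ) - 1) -
        2 * (m : ℝ) / n := by
  set f := hH.eigenvalues with hf
  set P : Finset (Fin n) := Finset.univ.filter (fun i => 0 ≤ f i) with hP
  have hi₀ : i₀ ∈ P := by
    simp only [hP, Finset.mem_filter, Finset.mem_univ, true_and]
    linarith
  -- E/2 = sum over P
  have habs : ∑ i, |f i| = 2 * ∑ i ∈ P, f i := by
    have h1 : ∑ i, |f i| =
        ∑ i ∈ P, f i + ∑ i ∈ Finset.univ.filter (fun i => ¬ 0 ≤ f i), (- f i) := by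
      rw [← Finset.sum_filter_add_sum_filter_not Finset.univ (fun i => 0 ≤ f i) (fun i => |f i|)]
      congr 1
      · exact Finset.sum_congr rfl fun i hi => abs_of_nonneg (Finset.mem_filter.mp hi).2
      · exact Finset.sum_congr rfl fun i hi =>
          abs_of_neg (lt_of_not_ge (Finset.mem_filter.mp hi).2)
    have h2 : ∑ i ∈ P, f i + ∑ i ∈ Finset.univ.filter (fun i => ¬ 0 ≤ f i), f i = 0 := by
      rw [Finset.sum_filter_add_sum_filter_not]; exact hsum
    rw [h1, Finset.sum_neg_distrib]
    linarith
  -- drop the negative-eigenvalue terms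
  have hdrop : ∑ i ∈ P, Real.exp (f i) ≤ ∑ i, Real.exp (f i) := by
    apply Finset.sum_le_sum_of_subset_of_nonneg (Finset.subset_univ P)
    intro i _ _
    exact (Real.exp_pos _).le
  -- the erase sum
  have hsplit : Real.exp (f i₀) + ∑ i ∈ P.erase i₀, Real.exp (f i)
      = ∑ i ∈ P, Real.exp (f i) := Finset.add_sum_erase P (fun i => Real.exp (f i)) hi₀
  have hsplitf : f i₀ + ∑ i ∈ P.erase i₀, f i = ∑ i ∈ P, f i :=
    Finset.add_sum_erase P f hi₀
  have hcard : ((P.erase i₀).card : ℝ) = (k : ℝ) - 1 := by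
    rw [Finset.card_erase_of_mem hi₀, Nat.cast_sub (Finset.card_pos.mpr ⟨i₀, hi₀⟩)]
    simp [hk]
  have hbound : ∑ i ∈ P.erase i₀, (f i + 1) ≤ ∑ i ∈ P.erase i₀, Real.exp (f i) :=
    Finset.sum_le_sum fun i _ => Real.add_one_le_exp (f i)
  have hsum1 : ∑ i ∈ P.erase i₀, (f i + 1)
      = (∑ i ∈ P.erase i₀, f i) + ((k : ℝ) - 1) := by
    rw [Finset.sum_add_distrib, Finset.sum_const, nsmul_eq_mul, mul_one, hcard]
  have hkey : Real.exp (2 * (m : ℝ) / n) - 2 * (m : ℝ) / n ≤ Real.exp (f i₀) - f i₀ :=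
    exp_sub_mono' h0 hlam
  linarith
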